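/- For every rack R, every commutative ring A, and every n ≥ 2, the composite ∂_{n−1} ∘ ∂_n : C^R_n(R;A) → C^R_{n−2}(R;A) is the zero map; hence (C^R_*(R;A), ∂_*) is a chain complex. -/

import Mathlib

/-- A rack in the convention of the paper: two binary operations `◁` (`tri`) and
`◀` (`triInv`) that are mutually inverse on the right and right self-distributive. -/
class PaperRack (α : Type*) where
  tri : α → α → α
  triInv : α → α → α
  triInv_tri : ∀ a b, triInv (tri a b) b = a
  tri_triInv : ∀ a b, tri (triInv a b) b = a
  tri_tri : ∀ a b c, tri (tri a b) c = tri (tri a c) (tri b c)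

/-- A quandle: a rack whose operations are idempotent. -/
class PaperQuandle (α : Type*) extends PaperRack α where
  tri_self : ∀ a, tri a a = a
  triInv_self : ∀ a, triInv a a = a

open PaperRack

/-- The rack chain module `C^R_n(R; A)`: the free `A`-module on `n`-tuples of
elements of `R` (for `n = 0` this is free on the unique empty tuple, i.e. `A`). -/
abbrev RackChains (R A : Type*) [CommRing A] (n : ℕ) : Type _ := (Fin n → R) →₀ A

/-- The `i`-th "acted" face of a tuple: delete the `i`-th entry and act by it on all
earlier entries: `(x₁ ◁ x_i, …, x_{i−1} ◁ x_i, x_{i+1}, …, xₙ)`. -/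
def dTop {R : Type*} [PaperRack R] {m : ℕ} (i : Fin (m + 1)) (x : Fin (m + 1) → R) :
    Fin m → R :=
  fun j => if ((i.succAbove j : Fin (m + 1)) : ℕ) < (i : ℕ)
    then tri (x (i.succAbove j)) (x i) else x (i.succAbove j)

/-- The `i`-th "deleted" face of a tuple: `(x₁, …, x_{i−1}, x_{i+1}, …, xₙ)`. -/
def dBot {R : Type*} {m : ℕ} (i : Fin (m + 1)) (x : Fin (m + 1) → R) : Fin m → R :=
  fun j => x (i.succAbove j)

/-- The boundary map `∂_{m+1} : C^R_{m+1}(R;A) → C^R_m(R;A)`; for `m + 1 ≥ 2` it is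
`∂_n(x₁,…,xₙ) = Σ_{i=1}^{n} (−1)^{n−i} [(x₁◁x_i,…,x_{i−1}◁x_i,x_{i+1},…,xₙ)
− (x₁,…,x_{i−1},x_{i+1},…,xₙ)]`, and `∂₁(x) = 1`. -/
noncomputable def rackBoundary (R A : Type*) [PaperRack R] [CommRing A] :
    (m : ℕ) → RackChains R A (m + 1) →ₗ[A] RackChains R A m
  | 0 => Finsupp.lsum A fun _ =>
      LinearMap.toSpanSingleton A _ (Finsupp.single (fun i : Fin 0 => i.elim0) (1 : A))
  | (m + 1) => Finsupp.lsum A fun x => LinearMap.toSpanSingleton A _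
      (∑ i : Fin (m + 2), ((-1 : A) ^ (m + 1 - (i : ℕ))) •
        (Finsupp.single (dTop i x) (1 : A) - Finsupp.single (dBot i x) (1 : A)))

/-- The degenerate chains `C^D_n(Q;A)`: the span of the `n`-tuples having two equal
adjacent entries. -/
noncomputable def Degen (R A : Type*) [CommRing A] (n : ℕ) : Submodule A (RackChains R A n) :=
  Submodule.span A
    { c | ∃ x : Fin n → R,
        (∃ i : ℕ, ∃ h : i + 1 < n, x ⟨i, by omega⟩ = x ⟨i + 1, h⟩) ∧
        c = Finsupp.single x (1 : A) }

/-- For every rack `R`, commutative ring `A` and `n ≥ 2` (here `n = m + 2`), the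
composite `∂_{n−1} ∘ ∂_n : C^R_n(R;A) → C^R_{n−2}(R;A)` is zero; hence the rack chain
modules form a chain complex. -/
lemma val_succAbove {n : ℕ} (i : Fin (n + 1)) (t : Fin n) :
    ((i.succAbove t : Fin (n + 1)) : ℕ) = if (t : ℕ) < (i : ℕ) then (t : ℕ) else (t : ℕ) + 1 := by
  rw [Fin.succAbove]
  split_ifs with h1 h2 h2 <;>
    simp_all [Fin.lt_iff_val_lt_val, Fin.castSucc, Fin.val_succ, Fin.castAdd, Fin.castLE] <;> omega

lemma dTop_apply {R : Type*} [PaperRack R] {m : ℕ} (i : Fin (m + 1)) (x : Fin (m + 1) → R)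
    (t : Fin m) :
    dTop i x t = if (t : ℕ) < (i : ℕ) then tri (x (i.succAbove t)) (x i)
      else x (i.succAbove t) := by
  unfold dTop
  rw [val_succAbove]
  split_ifs <;> first | rfl | omega

lemma dBot_apply {R : Type*} {m : ℕ} (i : Fin (m + 1)) (x : Fin (m + 1) → R) (t : Fin m) :
    dBot i x t = x (i.succAbove t) := rfl

section Faces
variable {R : Type*} [PaperRack R] {n : ℕ}

lemma face_TT (x' : ℕ → R) (i : Fin (n + 2)) (j : Fin (n + 1)) (h : (j : ℕ) < (i : ℕ)) :
    dTop (⟨(i : ℕ) - 1, by omega⟩ : Fin (n + 1))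
        (dTop (⟨(j : ℕ), by omega⟩ : Fin (n + 2)) (fun u => x' (u : ℕ)))
      = dTop j (dTop i (fun u => x' (u : ℕ))) := by
  funext t
  have hi := i.isLt; have hj := j.isLt; have ht := t.isLt
  simp only [dTop_apply, val_succAbove]
  split_ifs <;>
    first
      | rfl
      | (exfalso; omega)
      | (exact congrArg x' (by omega))
      | (congr 1 <;> first
          | rfl
          | (exact congrArg x' (by omega))
          | (congr 1 <;> first | rfl | exact congrArg x' (by omega)))
      | (rw [tri_tri]; congr 1 <;> first
          | rfl
          | (exact congrArg x' (by omega))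
          | (congr 1 <;> first | rfl | exact congrArg x' (by omega)))

lemma face_BT (x' : ℕ → R) (i : Fin (n + 2)) (j : Fin (n + 1)) (h : (j : ℕ) < (i : ℕ)) :
    dBot (⟨(i : ℕ) - 1, by omega⟩ : Fin (n + 1))
        (dTop (⟨(j : ℕ), by omega⟩ : Fin (n + 2)) (fun u => x' (u : ℕ)))
      = dTop j (dBot i (fun u => x' (u : ℕ))) := by
  funext t
  have hi := i.isLt; have hj := j.isLt; have ht := t.isLt
  simp only [dTop_apply, dBot_apply, val_succAbove]
  split_ifs <;>
    first
      | rfl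
      | (exfalso; omega)
      | (exact congrArg x' (by omega))
      | (congr 1 <;> first
          | rfl
          | (exact congrArg x' (by omega))
          | (congr 1 <;> first | rfl | exact congrArg x' (by omega)))
      | (rw [tri_tri]; congr 1 <;> first
          | rfl
          | (exact congrArg x' (by omega))
          | (congr 1 <;> first | rfl | exact congrArg x' (by omega)))

lemma face_TB (x' : ℕ → R) (i : Fin (n + 2)) (j : Fin (n + 1)) (h : (j : ℕ) < (i : ℕ)) :
    dTop (⟨(i : ℕ) - 1, by omega⟩ : Fin (n + 1))
        (dBot (⟨(j : ℕ), by omega⟩ : Fin (n + 2)) (fun u => x' (u : ℕ)))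
      = dBot j (dTop i (fun u => x' (u : ℕ))) := by
  funext t
  have hi := i.isLt; have hj := j.isLt; have ht := t.isLt
  simp only [dTop_apply, dBot_apply, val_succAbove]
  split_ifs <;>
    first
      | rfl
      | (exfalso; omega)
      | (exact congrArg x' (by omega))
      | (congr 1 <;> first
          | rfl
          | (exact congrArg x' (by omega))
          | (congr 1 <;> first | rfl | exact congrArg x' (by omega)))
      | (rw [tri_tri]; congr 1 <;> first
          | rfl
          | (exact congrArg x' (by omega))
          | (congr 1 <;> first | rfl | exact congrArg x' (by omega)))

lemma face_BB (x' : ℕ → R) (i : Fin (n + 2)) (j : Fin (n + 1)) (h : (j : ℕ) < (i : ℕ)) :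
    dBot (⟨(i : ℕ) - 1, by omega⟩ : Fin (n + 1))
        (dBot (⟨(j : ℕ), by omega⟩ : Fin (n + 2)) (fun u => x' (u : ℕ)))
      = dBot j (dBot i (fun u => x' (u : ℕ))) := by
  funext t
  have hi := i.isLt; have hj := j.isLt; have ht := t.isLt
  simp only [dBot_apply, val_succAbove]
  split_ifs <;>
    first
      | rfl
      | (exfalso; omega)
      | (exact congrArg x' (by omega))

end Faces

noncomputable def ffAux (R A : Type*) [PaperRack R] [CommRing A] (k : ℕ) (x : Fin (k + 3) → R)
    (p : Fin (k + 3) × Fin (k + 2)) : RackChains R A (k + 1) :=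
  ((-1 : A) ^ (k + 2 - (p.1 : ℕ)) * (-1 : A) ^ (k + 1 - (p.2 : ℕ))) •
    ((Finsupp.single (dTop p.2 (dTop p.1 x)) (1 : A)
        - Finsupp.single (dBot p.2 (dTop p.1 x)) (1 : A))
      - (Finsupp.single (dTop p.2 (dBot p.1 x)) (1 : A)
        - Finsupp.single (dBot p.2 (dBot p.1 x)) (1 : A)))

def ggAux (k : ℕ) (p : Fin (k + 3) × Fin (k + 2)) : Fin (k + 3) × Fin (k + 2) :=
  if h : (p.2 : ℕ) < (p.1 : ℕ) then
    (⟨(p.2 : ℕ), by have := p.2.isLt; omega⟩, ⟨(p.1 : ℕ) - 1, by have := p.1.isLt; omega⟩)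
  else
    (⟨(p.2 : ℕ) + 1, by have := p.2.isLt; omega⟩, ⟨(p.1 : ℕ), by have := p.2.isLt; omega⟩)

lemma ggAux_ne (k : ℕ) (p : Fin (k + 3) × Fin (k + 2)) : ggAux k p ≠ p := by
  unfold ggAux
  split_ifs with h <;> intro heq <;>
    (have h1 := congrArg (fun q : Fin (k + 3) × Fin (k + 2) => (q.1 : ℕ)) heq
     have h2 := congrArg (fun q : Fin (k + 3) × Fin (k + 2) => (q.2 : ℕ)) heq
     simp only at h1 h2
     omega)

lemma ggAux_ggAux (k : ℕ) (p : Fin (k + 3) × Fin (k + 2)) : ggAux k (ggAux k p) = p := by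
  unfold ggAux
  split_ifs with h h2 h2 <;> simp only at h2 ⊢ <;>
    first
      | (exfalso; omega)
      | (refine Prod.ext (Fin.ext ?_) (Fin.ext ?_) <;> simp <;> omega)

lemma key_add (R A : Type*) [PaperRack R] [CommRing A] (k : ℕ) (x : Fin (k + 3) → R)
    (i : Fin (k + 3)) (j : Fin (k + 2)) (h : (j : ℕ) < (i : ℕ)) :
    ffAux R A k x (i, j) + ffAux R A k x
      (⟨(j : ℕ), by have := j.isLt; omega⟩, ⟨(i : ℕ) - 1, by have := i.isLt; omega⟩) = 0 := by
  have hi := i.isLt; have hj := j.isLt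
  have hfac : x = fun u : Fin (k + 3) =>
      (fun p : ℕ => if hp : p < k + 3 then x ⟨p, hp⟩ else x ⟨0, by omega⟩) (u : ℕ) := by
    funext u
    simp [u.isLt]
  set x' : ℕ → R := fun p => if hp : p < k + 3 then x ⟨p, hp⟩ else x ⟨0, by omega⟩ with hx'
  rw [hfac]
  unfold ffAux
  simp only
  rw [face_TT x' i j h, face_BT x' i j h, face_TB x' i j h, face_BB x' i j h]
  have hsign : ((-1 : A) ^ (k + 2 - (j : ℕ)) * (-1 : A) ^ (k + 1 - ((i : ℕ) - 1)))
      = -((-1 : A) ^ (k + 2 - (i : ℕ)) * (-1 : A) ^ (k + 1 - (j : ℕ))) := by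
    have e1 : k + 2 - (j : ℕ) = (k + 1 - (j : ℕ)) + 1 := by omega
    have e2 : k + 1 - ((i : ℕ) - 1) = k + 2 - (i : ℕ) := by omega
    rw [e1, e2, pow_succ]
    ring
  rw [hsign, neg_smul]
  have gen : ∀ (s : A) (a b c d : RackChains R A (k + 1)),
      s • ((a - b) - (c - d)) + -(s • ((a - c) - (b - d))) = 0 := by
    intro s a b c d
    have hcd : (a - b) - (c - d) = (a - c) - (b - d) := by abel
    rw [hcd, add_neg_cancel]
  exact gen _ _ _ _ _

lemma sum_ffAux (R A : Type*) [PaperRack R] [CommRing A] (k : ℕ) (x : Fin (k + 3) → R) :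
    ∑ p : Fin (k + 3) × Fin (k + 2), ffAux R A k x p = 0 := by
  apply Finset.sum_ninvolution (ggAux k)
  · intro p
    obtain ⟨i, j⟩ := p
    unfold ggAux
    by_cases h : (j : ℕ) < (i : ℕ)
    · rw [dif_pos h]
      exact key_add R A k x i j h
    · rw [dif_neg h]
      have h2 := key_add R A k x ⟨(j : ℕ) + 1, by have := j.isLt; omega⟩
        ⟨(i : ℕ), by have := i.isLt; have := j.isLt; omega⟩
        (by show (i : ℕ) < (j : ℕ) + 1; omega)
      exact (add_comm _ _).trans h2
  · intro p _
    exact ggAux_ne k p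
  · intro p
    exact Finset.mem_univ _
  · intro p
    exact ggAux_ggAux k p


theorem rackBoundary_comp_rackBoundary (R A : Type*) [PaperRack R] [CommRing A] (m : ℕ) :
    (rackBoundary R A m).comp (rackBoundary R A (m + 1)) = 0 := by
  apply Finsupp.lhom_ext
  intro x a
  rw [LinearMap.comp_apply, LinearMap.zero_apply]
  match m with
  | 0 =>
    have h1 : rackBoundary R A (0 + 1) (Finsupp.single x a) =
        a • ∑ i : Fin 2, ((-1 : A) ^ (1 - (i : ℕ))) •
          (Finsupp.single (dTop i x) (1 : A) - Finsupp.single (dBot i x) (1 : A)) := by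
      simp [rackBoundary, Finsupp.lsum_single, LinearMap.toSpanSingleton_apply]
    have h0 : ∀ y : Fin 1 → R, rackBoundary R A 0 (Finsupp.single y (1 : A)) =
        Finsupp.single (fun i : Fin 0 => i.elim0) (1 : A) := by
      intro y
      simp [rackBoundary, Finsupp.lsum_single, LinearMap.toSpanSingleton_apply]
    rw [h1, map_smul, map_sum]
    simp [map_sub, h0]
  | (k + 1) =>
    have h1 : rackBoundary R A (k + 1 + 1) (Finsupp.single x a) =
        a • ∑ i : Fin (k + 3), ((-1 : A) ^ (k + 2 - (i : ℕ))) •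
          (Finsupp.single (dTop i x) (1 : A) - Finsupp.single (dBot i x) (1 : A)) := by
      simp [rackBoundary, Finsupp.lsum_single, LinearMap.toSpanSingleton_apply]
    have h0 : ∀ y : Fin (k + 2) → R, rackBoundary R A (k + 1) (Finsupp.single y (1 : A)) =
        ∑ j : Fin (k + 2), ((-1 : A) ^ (k + 1 - (j : ℕ))) •
          (Finsupp.single (dTop j y) (1 : A) - Finsupp.single (dBot j y) (1 : A)) := by
      intro y
      simp [rackBoundary, Finsupp.lsum_single, LinearMap.toSpanSingleton_apply]
    rw [h1, map_smul, map_sum]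
    have step : ∀ i : Fin (k + 3),
        rackBoundary R A (k + 1) (((-1 : A) ^ (k + 2 - (i : ℕ))) •
          (Finsupp.single (dTop i x) (1 : A) - Finsupp.single (dBot i x) (1 : A)))
        = ∑ j : Fin (k + 2), ffAux R A k x (i, j) := by
      intro i
      rw [map_smul, map_sub, h0, h0, ← Finset.sum_sub_distrib, Finset.smul_sum]
      refine Finset.sum_congr rfl fun j _ => ?_
      rw [← smul_sub, ← mul_smul]
      rfl
    rw [Finset.sum_congr rfl (fun i _ => step i), ← Fintype.sum_prod_type,
      sum_ffAux R A k x, smul_zero]
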